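/- arXiv:2210.07067 — 2 statements merged into one kernel-verified Lean document; each statement's English description precedes it below -/
import Mathlib

section
/- Let X be a Banach space, 1 ≤ p ≤ ∞ with conjugate exponent p', and let 0 < q < p'. Let ρ = (ρ_j)_{j≥1} be a sequence with ρ_j > 1 for all j and (ρ_j^{-1})_{j≥1} ∈ ℓ_q(ℕ). Let (t_ν)_{ν∈F} be a family in X with M := ‖(ρ^ν ‖t_ν‖_X)_{ν∈F}‖_{ℓ_p(F)} < ∞, and suppose the series u(y) = Σ_{ν∈F} t_ν y^ν converges absolutely in X for every y ∈ Y. Then for every integer m ≥ 0 there exists a lower set Λ ⊆ F with #Λ = m+1 such that the polynomial P(y) := Σ_{ν∈Λ} t_ν y^ν satisfies sup_{y∈Y} ‖u(y) − P(y)‖_X ≤ M · ‖(ρ^{−ν})_{ν∈F\{0}}‖_{ℓ_q} · (m+1)^{−r}, where r := −1 + 1/p + 1/q > 0. -/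
open scoped BigOperators ENNReal

noncomputable section

/-- The set `F` of finitely supported multi-indices. -/
abbrev MIdx : Type := ℕ →₀ ℕ

/-- `ρ^ν := ∏_j ρ_j^{ν_j}` for a finitely supported multi-index `ν`. -/
def mpow (ρ : ℕ → ℝ) (ν : MIdx) : ℝ := ν.prod fun j k => ρ j ^ k

/-- The `ℓ_p(F)` norm (`p ∈ [1,∞]`, valued in `ℝ≥0∞`) of a family of nonnegative reals. -/
def lpF (p : ℝ≥0∞) (a : MIdx → ℝ) : ℝ≥0∞ :=
  if p = ∞ then ⨆ ν, ENNReal.ofReal (a ν)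
  else (∑' ν, ENNReal.ofReal (a ν) ^ p.toReal) ^ (1 / p.toReal)

lemma mpow_add (ρ : ℕ → ℝ) (μ ν : MIdx) : mpow ρ (μ + ν) = mpow ρ μ * mpow ρ ν :=
  Finsupp.prod_add_index' (fun j => pow_zero _) (fun j a b => pow_add _ a b)

lemma one_le_mpow {ρ : ℕ → ℝ} (hρ : ∀ j, 1 ≤ ρ j) (ν : MIdx) : 1 ≤ mpow ρ ν := by
  rw [mpow, Finsupp.prod]
  have := Finset.prod_le_prod (s := ν.support) (f := fun _ => (1:ℝ))
    (g := fun j => ρ j ^ ν j) (fun _ _ => zero_le_one) (fun j _ => one_le_pow₀ (hρ j))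
  simpa using this

lemma mpow_pos {ρ : ℕ → ℝ} (hρ : ∀ j, 1 ≤ ρ j) (ν : MIdx) : 0 < mpow ρ ν :=
  lt_of_lt_of_le one_pos (one_le_mpow hρ ν)

lemma one_lt_mpow {ρ : ℕ → ℝ} (hρ : ∀ j, 1 < ρ j) {ν : MIdx} (hν : ν ≠ 0) : 1 < mpow ρ ν := by
  have hsupp : ν.support.Nonempty := Finsupp.support_nonempty_iff.mpr hν
  rw [mpow, Finsupp.prod]
  have := Finset.prod_lt_prod_of_nonempty (s := ν.support) (f := fun _ => (1:ℝ))
    (g := fun j => ρ j ^ ν j) (fun _ _ => zero_lt_one)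
    (fun j hj => one_lt_pow₀ (hρ j) (Finsupp.mem_support_iff.mp hj)) hsupp
  simpa using this

lemma mpow_lt_mpow {ρ : ℕ → ℝ} (hρ : ∀ j, 1 < ρ j) {μ ν : MIdx} (h : μ < ν) :
    mpow ρ μ < mpow ρ ν := by
  have hle : μ ≤ ν := h.le
  have : ν = μ + (ν - μ) := (add_tsub_cancel_of_le hle).symm
  rw [this, mpow_add]
  have hne : ν - μ ≠ 0 := by
    intro h0
    apply h.ne
    have := congrArg (· + μ) h0
    simpa [tsub_add_cancel_of_le hle] using this.symm
  have h1 : 1 < mpow ρ (ν - μ) := one_lt_mpow hρ hne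
  nlinarith [mpow_pos (fun j => (hρ j).le) μ]

lemma abs_mpow_le_one {y : ℕ → ℝ} (hy : ∀ j, |y j| ≤ 1) (ν : MIdx) : |mpow y ν| ≤ 1 := by
  rw [mpow, Finsupp.prod, Finset.abs_prod]
  refine Finset.prod_le_one (fun j _ => abs_nonneg _) fun j _ => ?_
  rw [abs_pow]
  exact pow_le_one₀ (abs_nonneg _) (hy j)

lemma mpow_one (ν : MIdx) : mpow (fun _ => (1:ℝ)) ν = 1 := by
  rw [mpow, Finsupp.prod]
  exact Finset.prod_eq_one fun j _ => one_pow _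

lemma exists_lower_dominating (a : MIdx → ℝ) (hpos : ∀ ν, 0 < a ν)
    (hstrict : ∀ μ ν : MIdx, μ < ν → a ν < a μ)
    (hfin : ∀ c : ℝ, 0 < c → {ν : MIdx | c ≤ a ν}.Finite) (m : ℕ) :
    ∃ Λ : Finset MIdx, Λ.card = m + 1 ∧ (∀ ν ∈ Λ, ∀ μ : MIdx, μ ≤ ν → μ ∈ Λ) ∧
      ∀ μ ∉ Λ, ∀ ν ∈ Λ, a μ ≤ a ν := by
  induction m with
  | zero =>
    refine ⟨{0}, rfl, ?_, ?_⟩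
    · intro ν hν μ hμ
      simp only [Finset.mem_singleton] at hν ⊢
      subst hν
      exact le_antisymm hμ zero_le
    · intro μ hμ ν hν
      simp only [Finset.mem_singleton] at hμ hν
      subst hν
      exact (hstrict 0 μ (pos_iff_ne_zero.mpr hμ)).le
  | succ k ih =>
    obtain ⟨Λ, hcard, hlow, hdom⟩ := ih
    obtain ⟨μ₀, hμ₀⟩ := Infinite.exists_notMem_finset Λ
    set T : Finset MIdx :=
      ((hfin (a μ₀) (hpos μ₀)).toFinset.filter (fun ν => ν ∉ Λ)) with hT
    have hμ₀T : μ₀ ∈ T := by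
      rw [hT, Finset.mem_filter, Set.Finite.mem_toFinset]
      exact ⟨show a μ₀ ≤ a μ₀ from le_refl _, hμ₀⟩
    obtain ⟨ν, hνT, hνmax⟩ := T.exists_max_image a ⟨μ₀, hμ₀T⟩
    have hνΛ : ν ∉ Λ := (Finset.mem_filter.mp hνT).2
    have hνc : a μ₀ ≤ a ν := by
      have := (Finset.mem_filter.mp hνT).1
      rwa [Set.Finite.mem_toFinset] at this
    refine ⟨insert ν Λ, by rw [Finset.card_insert_of_notMem hνΛ, hcard], ?_, ?_⟩
    · intro ν' hν' μ hμ
      rcases Finset.mem_insert.mp hν' with rfl | h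
      · rcases eq_or_lt_of_le hμ with rfl | hlt
        · exact Finset.mem_insert_self _ _
        · by_contra hc
          have hμΛ : μ ∉ Λ := fun h => hc (Finset.mem_insert_of_mem h)
          have h1 : a ν' < a μ := hstrict _ _ hlt
          have hμT : μ ∈ T := by
            rw [hT, Finset.mem_filter, Set.Finite.mem_toFinset]
            exact ⟨(hνc.trans h1.le), hμΛ⟩
          exact absurd (hνmax μ hμT) (not_le.mpr h1)
      · exact Finset.mem_insert_of_mem (hlow ν' h μ hμ)
    · intro μ hμ ν' hν'
      have hμΛ : μ ∉ Λ := fun h => hμ (Finset.mem_insert_of_mem h)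
      rcases Finset.mem_insert.mp hν' with rfl | h
      · by_cases hc : a μ₀ ≤ a μ
        · refine hνmax μ ?_
          rw [hT, Finset.mem_filter, Set.Finite.mem_toFinset]
          exact ⟨hc, hμΛ⟩
        · exact ((not_le.mp hc).le).trans hνc
      · exact hdom μ hμΛ ν' h

lemma holder_tsum {ι : Type*} (f g : ι → ℝ≥0∞) {s t : ℝ} (hst : s.HolderConjugate t) :
    ∑' i, f i * g i ≤ (∑' i, f i ^ s) ^ (1 / s) * (∑' i, g i ^ t) ^ (1 / t) := by
  rw [ENNReal.tsum_eq_iSup_sum]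
  refine iSup_le fun u => ?_
  refine (ENNReal.inner_le_Lp_mul_Lq u f g hst).trans ?_
  have h1 : (0:ℝ) ≤ 1 / s := hst.one_div_pos.le
  have h2 : (0:ℝ) ≤ 1 / t := hst.symm.one_div_pos.le
  exact mul_le_mul' (ENNReal.rpow_le_rpow (ENNReal.sum_le_tsum u) h1)
    (ENNReal.rpow_le_rpow (ENNReal.sum_le_tsum u) h2)

lemma lpF_eq_zero {p : ℝ≥0∞} (hp : 1 ≤ p) {g : MIdx → ℝ} (h0 : lpF p g = 0) (ν : MIdx) :
    ENNReal.ofReal (g ν) = 0 := by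
  by_cases hptop : p = ∞
  · rw [lpF, if_pos hptop] at h0
    exact le_antisymm (le_trans (le_iSup (fun ν => ENNReal.ofReal (g ν)) ν) h0.le) zero_le
  · rw [lpF, if_neg hptop] at h0
    have hc : 0 < p.toReal := ENNReal.toReal_pos (lt_of_lt_of_le one_pos hp).ne' hptop
    have hsum : (∑' ν, ENNReal.ofReal (g ν) ^ p.toReal) = 0 := by
      rcases (ENNReal.rpow_eq_zero_iff.mp h0) with ⟨h, _⟩ | ⟨_, h⟩
      · exact h
      · exact absurd h (not_lt.mpr (by positivity))
    have := (ENNReal.tsum_eq_zero.mp hsum) ν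
    rcases (ENNReal.rpow_eq_zero_iff.mp this) with ⟨h, _⟩ | ⟨h, _⟩
    · exact h
    · exact absurd h (ENNReal.ofReal_ne_top)


lemma stechkin {ι : Type*} (A' : ι → ℝ≥0∞) {S : ℝ≥0∞} (hS0 : S ≠ 0) (hStop : S ≠ ⊤)
    {q s : ℝ} (hq : 0 < q) (hqs : q ≤ s) (m : ℕ)
    (hA0 : ∀ i, A' i ≠ 0) (hAtop : ∀ i, A' i ≠ ⊤)
    (hK1 : ∀ i, A' i ≤ (S / ((m : ℝ≥0∞) + 1)) ^ (1 / q))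
    (hK2 : ∑' i, A' i ^ q ≤ S) :
    (∑' i, A' i ^ s) ^ (1 / s) ≤ S ^ (1 / q) * ((m : ℝ≥0∞) + 1) ^ (-(1 / q - 1 / s)) := by
  have hs : 0 < s := lt_of_lt_of_le hq hqs
  have hm0 : ((m : ℝ≥0∞) + 1) ≠ 0 := by simp
  have hmtop : ((m : ℝ≥0∞) + 1) ≠ ⊤ := by
    exact ENNReal.add_ne_top.mpr ⟨ENNReal.natCast_ne_top m, ENNReal.one_ne_top⟩
  have hitop : ((m : ℝ≥0∞) + 1)⁻¹ ≠ ⊤ := ENNReal.inv_ne_top.mpr hm0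
  have he : (0:ℝ) ≤ (s - q) / q := div_nonneg (by linarith) hq.le
  have hDtop : S * ((m : ℝ≥0∞) + 1)⁻¹ ≠ ⊤ := ENNReal.mul_ne_top hStop hitop
  have key : ∀ i, A' i ^ s ≤ (S / ((m : ℝ≥0∞) + 1)) ^ ((s - q) / q) * A' i ^ q := by
    intro i
    have h1 : A' i ^ s = A' i ^ (s - q) * A' i ^ q := by
      rw [← ENNReal.rpow_add _ _ (hA0 i) (hAtop i)]
      ring_nf
    rw [h1]
    refine mul_le_mul' ?_ le_rfl
    calc A' i ^ (s - q) ≤ ((S / ((m : ℝ≥0∞) + 1)) ^ (1 / q)) ^ (s - q) :=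
          ENNReal.rpow_le_rpow (hK1 i) (by linarith)
      _ = (S / ((m : ℝ≥0∞) + 1)) ^ ((s - q) / q) := by
          rw [← ENNReal.rpow_mul]
          congr 1
          field_simp
  have hsum : ∑' i, A' i ^ s ≤ (S / ((m : ℝ≥0∞) + 1)) ^ ((s - q) / q) * S := by
    calc ∑' i, A' i ^ s ≤ ∑' i, (S / ((m : ℝ≥0∞) + 1)) ^ ((s - q) / q) * A' i ^ q :=
          ENNReal.tsum_le_tsum key
      _ = (S / ((m : ℝ≥0∞) + 1)) ^ ((s - q) / q) * ∑' i, A' i ^ q := ENNReal.tsum_mul_left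
      _ ≤ _ := mul_le_mul' le_rfl hK2
  refine le_trans (ENNReal.rpow_le_rpow hsum (by positivity)) (le_of_eq ?_)
  rw [div_eq_mul_inv]
  calc ((S * ((m : ℝ≥0∞) + 1)⁻¹) ^ ((s - q) / q) * S) ^ (1 / s)
      = ((S * ((m : ℝ≥0∞) + 1)⁻¹) ^ ((s - q) / q)) ^ (1 / s) * S ^ (1 / s) :=
        ENNReal.mul_rpow_of_ne_top (ENNReal.rpow_ne_top_of_nonneg he hDtop) hStop _
    _ = (S * ((m : ℝ≥0∞) + 1)⁻¹) ^ ((s - q) / q * (1 / s)) * S ^ (1 / s) := by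
        rw [← ENNReal.rpow_mul]
    _ = S ^ ((s - q) / q * (1 / s)) * (((m : ℝ≥0∞) + 1)⁻¹) ^ ((s - q) / q * (1 / s)) *
          S ^ (1 / s) := by
        rw [ENNReal.mul_rpow_of_ne_top hStop hitop]
    _ = S ^ ((s - q) / q * (1 / s) + 1 / s) * (((m : ℝ≥0∞) + 1)⁻¹) ^ ((s - q) / q * (1 / s)) := by
        rw [ENNReal.rpow_add _ _ hS0 hStop]
        ring
    _ = S ^ (1 / q) * ((m : ℝ≥0∞) + 1) ^ (-(1 / q - 1 / s)) := by
        rw [ENNReal.inv_rpow, ← ENNReal.rpow_neg]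
        congr 2
        · field_simp
          ring
        · field_simp

lemma lower_line (m : ℕ) :
    ∃ Λ : Finset MIdx, Λ.card = m + 1 ∧ (∀ ν ∈ Λ, ∀ μ : MIdx, μ ≤ ν → μ ∈ Λ) := by
  refine ⟨(Finset.range (m + 1)).image (fun k => Finsupp.single 0 k), ?_, ?_⟩
  · rw [Finset.card_image_of_injective _ (Finsupp.single_injective 0), Finset.card_range]
  · intro ν hν μ hμ
    obtain ⟨k, hk, rfl⟩ := Finset.mem_image.mp hν
    have hμj : ∀ j, μ j ≤ Finsupp.single 0 k j := fun j => Finsupp.le_def.mp hμ j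
    have hμ0 : μ = Finsupp.single 0 (μ 0) := by
      ext j
      rcases eq_or_ne j 0 with rfl | hj
      · simp
      · have := hμj j
        rw [Finsupp.single_apply, if_neg (fun h => hj h.symm)] at this
        rw [Finsupp.single_apply, if_neg (fun h => hj h.symm)]
        omega
    rw [hμ0]
    refine Finset.mem_image.mpr ⟨μ 0, Finset.mem_range.mpr ?_, rfl⟩
    have := hμj 0
    rw [Finsupp.single_apply, if_pos rfl] at this
    exact lt_of_le_of_lt this (Finset.mem_range.mp hk)



/-- Global Taylor approximation error estimate for an anisotropic analytic
function `u(y) = Σ_ν t_ν y^ν` in the class `B_{ρ,p}`: there is a lower set `Λ` of cardinality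
`m+1` such that the Taylor polynomial `P(y) = Σ_{ν∈Λ} t_ν y^ν` satisfies
`sup_{y∈Y} ‖u(y) − P(y)‖ ≤ M ‖(ρ^{-ν})_{ν≠0}‖_{ℓ_q} (m+1)^{-r}`, `r = -1 + 1/p + 1/q > 0`.
(The condition `0 < q < p'` is encoded by `0 < q` together with `0 < r`.) -/
theorem global_taylor_error
    {X : Type*} [NormedAddCommGroup X] [NormedSpace ℝ X] [CompleteSpace X]
    (p : ℝ≥0∞) (hp : 1 ≤ p)
    (q : ℝ) (hq : 0 < q)
    (r : ℝ) (hrdef : r = -1 + 1 / p.toReal + 1 / q) (hr : 0 < r)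
    (ρ : ℕ → ℝ) (hρ : ∀ j, 1 < ρ j)
    (hρq : Summable fun j => ((ρ j)⁻¹) ^ q)
    (t : MIdx → X)
    (M : ℝ≥0∞) (hM : M = lpF p fun ν => mpow ρ ν * ‖t ν‖) (hMfin : M ≠ ∞)
    (habs : ∀ y : ℕ → ℝ, (∀ j, |y j| ≤ 1) →
      Summable fun ν : MIdx => ‖mpow y ν • t ν‖)
    (m : ℕ) :
    ∃ Λ : Finset MIdx, Λ.card = m + 1 ∧
      (∀ ν ∈ Λ, ∀ μ : MIdx, μ ≤ ν → μ ∈ Λ) ∧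
      ∀ y : ℕ → ℝ, (∀ j, |y j| ≤ 1) →
        ENNReal.ofReal ‖(∑' ν : MIdx, mpow y ν • t ν) - ∑ ν ∈ Λ, mpow y ν • t ν‖ ≤
          M * (∑' ν : {ν : MIdx // ν ≠ 0}, ENNReal.ofReal ((mpow ρ ν.1)⁻¹) ^ q) ^ (1 / q) *
            ENNReal.ofReal (((m : ℝ) + 1) ^ (-r)) := by
  classical
  have hρ1 : ∀ j, (1:ℝ) ≤ ρ j := fun j => (hρ j).le
  set A : MIdx → ℝ≥0∞ := fun ν => ENNReal.ofReal ((mpow ρ ν)⁻¹) with hA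
  set B : MIdx → ℝ≥0∞ := fun ν => ENNReal.ofReal (mpow ρ ν * ‖t ν‖) with hB
  set S : ℝ≥0∞ := ∑' ν : {ν : MIdx // ν ≠ 0}, ENNReal.ofReal ((mpow ρ ν.1)⁻¹) ^ q with hS
  have hA0 : ∀ ν, A ν ≠ 0 := fun ν =>
    (ENNReal.ofReal_pos.mpr (inv_pos.mpr (mpow_pos hρ1 ν))).ne'
  have hAtop : ∀ ν, A ν ≠ ⊤ := fun ν => ENNReal.ofReal_ne_top
  have ht1 : Summable fun ν : MIdx => ‖t ν‖ := by
    have := habs (fun _ => 1) (fun j => by norm_num)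
    simpa [mpow_one] using this
  -- conversion of the (m+1)^(-r) factor
  have hconv : ∀ e : ℝ, ((m : ℝ≥0∞) + 1) ^ (-e) = ENNReal.ofReal (((m : ℝ) + 1) ^ (-e)) := by
    intro e
    rw [← ENNReal.ofReal_rpow_of_pos (by positivity)]
    congr 1
    rw [ENNReal.ofReal_add (Nat.cast_nonneg m) zero_le_one, ENNReal.ofReal_natCast,
      ENNReal.ofReal_one]
  -- the basic error bound
  have Ebound : ∀ (Λ : Finset MIdx) (y : ℕ → ℝ), (∀ j, |y j| ≤ 1) →
      ENNReal.ofReal ‖(∑' ν : MIdx, mpow y ν • t ν) - ∑ ν ∈ Λ, mpow y ν • t ν‖ ≤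
        ∑' (ν : ↑((↑Λ : Set MIdx)ᶜ)), B ν.1 * A ν.1 := by
    intro Λ y hy
    have hsn := habs y hy
    have hf : Summable (fun ν : MIdx => mpow y ν • t ν) := hsn.of_norm
    have hsplit : (∑' ν : MIdx, mpow y ν • t ν) - ∑ ν ∈ Λ, mpow y ν • t ν
        = ∑' (ν : ↑((↑Λ : Set MIdx)ᶜ)), mpow y ν.1 • t ν.1 := by
      have e : ∑' (x : ↑(↑Λ : Set MIdx)), mpow y x.1 • t x.1 = ∑ ν ∈ Λ, mpow y ν • t ν :=
        Finset.tsum_subtype' Λ (fun ν => mpow y ν • t ν)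
      rw [sub_eq_iff_eq_add', ← e]
      exact (Summable.tsum_add_tsum_compl (hf.subtype _) (hf.subtype _)).symm
    rw [hsplit]
    have h2 : ‖∑' (ν : ↑((↑Λ : Set MIdx)ᶜ)), mpow y ν.1 • t ν.1‖
        ≤ ∑' (ν : ↑((↑Λ : Set MIdx)ᶜ)), ‖t ν.1‖ := by
      refine (norm_tsum_le_tsum_norm (hsn.subtype _)).trans ?_
      refine Summable.tsum_le_tsum (fun ν => ?_) (hsn.subtype _) (ht1.subtype _)
      have h3 : ‖mpow y ν.1 • t ν.1‖ = ‖mpow y ν.1‖ * ‖t ν.1‖ := norm_smul _ _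
      rw [h3]
      refine mul_le_of_le_one_left (norm_nonneg _) ?_
      rw [Real.norm_eq_abs]
      exact abs_mpow_le_one hy ν.1
    refine le_trans (ENNReal.ofReal_le_ofReal h2) ?_
    rw [ENNReal.ofReal_tsum_of_nonneg (fun _ => norm_nonneg _) (ht1.subtype _)]
    refine le_of_eq (tsum_congr fun ν => ?_)
    rw [hB, hA]
    rw [← ENNReal.ofReal_mul (mul_nonneg (mpow_pos hρ1 ν.1).le (norm_nonneg _))]
    congr 1
    rw [mul_comm (mpow ρ ν.1) ‖t ν.1‖, mul_assoc, mul_inv_cancel₀ (mpow_pos hρ1 ν.1).ne',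
      mul_one]
  by_cases hStop : S = ⊤
  · -- degenerate case: the q-norm of the tail weights is infinite
    obtain ⟨Λ, hcard, hlow⟩ := lower_line m
    refine ⟨Λ, hcard, hlow, fun y hy => ?_⟩
    by_cases hM0 : M = 0
    · have ht0 : ∀ ν, t ν = 0 := by
        intro ν
        have h1 := lpF_eq_zero hp (hM.symm.trans hM0) ν
        rw [ENNReal.ofReal_eq_zero] at h1
        have hpos := mpow_pos hρ1 ν
        have h4 : ‖t ν‖ ≤ 0 := by nlinarith [norm_nonneg (t ν)]
        simpa using norm_le_zero_iff.mp h4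
      simp [ht0]
    · have hrhs : M * S ^ (1/q) * ENNReal.ofReal (((m : ℝ) + 1) ^ (-r)) = ⊤ := by
        rw [hStop, ENNReal.top_rpow_of_pos (by positivity), ENNReal.mul_top hM0,
          ENNReal.top_mul (ENNReal.ofReal_pos.mpr (Real.rpow_pos_of_pos (by positivity) _)).ne']
      rw [hrhs]
      exact le_top
  · -- main case : S < ∞
    have hS0 : S ≠ 0 := by
      have hne : (Finsupp.single 0 1 : MIdx) ≠ 0 := by
        simp [Finsupp.single_eq_zero]
      have hterm : (0:ℝ≥0∞) < ENNReal.ofReal ((mpow ρ (Finsupp.single 0 1))⁻¹) ^ q :=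
        ENNReal.rpow_pos (ENNReal.ofReal_pos.mpr (inv_pos.mpr (mpow_pos hρ1 _)))
          ENNReal.ofReal_ne_top
      have hle : ENNReal.ofReal ((mpow ρ (Finsupp.single 0 1))⁻¹) ^ q ≤ S :=
        ENNReal.le_tsum (⟨Finsupp.single 0 1, hne⟩ : {ν : MIdx // ν ≠ 0})
      exact (lt_of_lt_of_le hterm hle).ne'
    -- summability of the real q-powers on the nonzero indices
    have hsub : Summable (fun ν : {ν : MIdx // ν ≠ 0} => ((mpow ρ ν.1)⁻¹) ^ q) := by
      have h1 := ENNReal.summable_toReal (hS ▸ hStop)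
      refine h1.congr fun ν => ?_
      rw [ENNReal.ofReal_rpow_of_pos (inv_pos.mpr (mpow_pos hρ1 _)),
        ENNReal.toReal_ofReal (Real.rpow_nonneg (inv_nonneg.mpr (mpow_pos hρ1 _).le) _)]
    have hfin : ∀ c : ℝ, 0 < c → {ν : MIdx | c ≤ (mpow ρ ν)⁻¹}.Finite := by
      intro c hc
      have hev : ∀ᶠ ν : {ν : MIdx // ν ≠ 0} in Filter.cofinite,
          ((mpow ρ ν.1)⁻¹) ^ q < c ^ q :=
        hsub.tendsto_cofinite_zero.eventually_lt_const (Real.rpow_pos_of_pos hc q)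
      have hfin' : {ν : {ν : MIdx // ν ≠ 0} | ¬ ((mpow ρ ν.1)⁻¹) ^ q < c ^ q}.Finite := by
        simpa [Filter.eventually_cofinite] using hev
      refine Set.Finite.subset ((hfin'.image Subtype.val).insert 0) ?_
      intro ν hν
      rcases eq_or_ne ν 0 with rfl | h0
      · exact Set.mem_insert _ _
      · refine Set.mem_insert_of_mem _ ⟨⟨ν, h0⟩, ?_, rfl⟩
        simp only [Set.mem_setOf_eq, not_lt]
        exact Real.rpow_le_rpow hc.le hν hq.le
    obtain ⟨Λ, hcard, hlow, hdom⟩ := exists_lower_dominating (fun ν => (mpow ρ ν)⁻¹)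
      (fun ν => inv_pos.mpr (mpow_pos hρ1 ν))
      (fun μ ν h => by
        have h1 := mpow_lt_mpow hρ h
        exact inv_strictAnti₀ (mpow_pos hρ1 μ) h1)
      hfin m
    have h0Λ : (0:MIdx) ∈ Λ := by
      obtain ⟨ν, hν⟩ := Finset.card_pos.mp (by rw [hcard]; omega)
      exact hlow ν hν 0 zero_le
    refine ⟨Λ, hcard, hlow, fun y hy => ?_⟩
    refine le_trans (Ebound Λ y hy) ?_
    -- S as an indicator sum
    have hS2 : S = ∑' ν : MIdx, Set.indicator {ν : MIdx | ν ≠ 0} (fun ν => A ν ^ q) ν := by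
      rw [hS]
      exact tsum_subtype {ν : MIdx | ν ≠ 0} (fun ν => A ν ^ q)
    have hm0 : ((m : ℝ≥0∞) + 1) ≠ 0 := by simp
    have hmtop : ((m : ℝ≥0∞) + 1) ≠ ⊤ :=
      ENNReal.add_ne_top.mpr ⟨ENNReal.natCast_ne_top m, ENNReal.one_ne_top⟩
    -- Stechkin input 1
    have hK1 : ∀ μ : MIdx, μ ∉ Λ → A μ ≤ (S / ((m : ℝ≥0∞) + 1)) ^ (1 / q) := by
      intro μ hμ
      have hmem : ∀ ν ∈ insert μ (Λ.erase 0), ν ∈ {ν : MIdx | ν ≠ 0} := by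
        intro ν hν
        rcases Finset.mem_insert.mp hν with rfl | h
        · exact fun h0 => hμ (h0 ▸ h0Λ)
        · exact Finset.ne_of_mem_erase h
      have hcard' : (insert μ (Λ.erase 0)).card = m + 1 := by
        rw [Finset.card_insert_of_notMem (fun h => hμ (Finset.mem_of_mem_erase h)),
          Finset.card_erase_of_mem h0Λ, hcard]
        omega
      have hsum1 : ∑ ν ∈ insert μ (Λ.erase 0), A ν ^ q ≤ S := by
        rw [hS2]
        refine le_trans (le_of_eq (Finset.sum_congr rfl fun ν hν =>
          (Set.indicator_of_mem (hmem ν hν) (fun ν => A ν ^ q)).symm)) (ENNReal.sum_le_tsum _)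
      have hsum2 : ((m : ℝ≥0∞) + 1) * A μ ^ q ≤ ∑ ν ∈ insert μ (Λ.erase 0), A ν ^ q := by
        have hterm : ∀ ν ∈ insert μ (Λ.erase 0), A μ ^ q ≤ A ν ^ q := by
          intro ν hν
          rcases Finset.mem_insert.mp hν with rfl | h
          · exact le_rfl
          · exact ENNReal.rpow_le_rpow
              (ENNReal.ofReal_le_ofReal (hdom μ hμ ν (Finset.mem_of_mem_erase h))) hq.le
        calc ((m : ℝ≥0∞) + 1) * A μ ^ q
            = ((insert μ (Λ.erase 0)).card : ℝ≥0∞) * A μ ^ q := by rw [hcard']; push_cast; ring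
          _ = ∑ _ν ∈ insert μ (Λ.erase 0), A μ ^ q := by rw [Finset.sum_const, nsmul_eq_mul]
          _ ≤ _ := Finset.sum_le_sum hterm
      have hAq : A μ ^ q ≤ S / ((m : ℝ≥0∞) + 1) :=
        (ENNReal.le_div_iff_mul_le (Or.inl hm0) (Or.inl hmtop)).mpr
          (by rw [mul_comm]; exact le_trans hsum2 hsum1)
      calc A μ = (A μ ^ q) ^ (1 / q) := by
            rw [← ENNReal.rpow_mul, mul_one_div_cancel hq.ne', ENNReal.rpow_one]
        _ ≤ _ := ENNReal.rpow_le_rpow hAq (by positivity)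
    -- Stechkin input 2
    have hK2 : ∑' (ν : ↑((↑Λ : Set MIdx)ᶜ)), A ν.1 ^ q ≤ S := by
      have e1 : ∑' (ν : ↑((↑Λ : Set MIdx)ᶜ)), A ν.1 ^ q
          = ∑' (ν : MIdx), Set.indicator ((↑Λ : Set MIdx)ᶜ) (fun ν => A ν ^ q) ν :=
        tsum_subtype ((↑Λ : Set MIdx)ᶜ) (fun ν => A ν ^ q)
      rw [hS2, e1]
      refine Summable.tsum_le_tsum (fun ν => ?_) ENNReal.summable ENNReal.summable
      refine Set.indicator_le_indicator_of_subset ?_ (fun _ => zero_le) ν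
      intro x hx
      exact fun h0 => hx (by rw [h0]; exact Finset.mem_coe.mpr h0Λ)
    by_cases hptop : p = ⊤
    · -- p = ∞
      have hc0 : p.toReal = 0 := by rw [hptop]; exact ENNReal.toReal_top
      have hrq : r = 1 / q - 1 := by rw [hrdef, hc0]; rw [div_zero]; ring
      have hq1 : q ≤ 1 := by
        have h1 : (1:ℝ) / 1 < 1 / q := by rw [div_one]; rw [hrq] at hr; linarith
        have h2 := (div_lt_div_iff₀ one_pos hq).mp h1
        linarith
      have hMB : ∀ ν : MIdx, B ν ≤ M := by
        intro ν
        rw [hM, lpF, if_pos hptop]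
        exact le_iSup (fun ν => ENNReal.ofReal (mpow ρ ν * ‖t ν‖)) ν
      have hstech := stechkin (fun ν : ↑((↑Λ : Set MIdx)ᶜ) => A ν.1) hS0 hStop hq hq1 m
        (fun ν => hA0 ν.1) (fun ν => hAtop ν.1)
        (fun ν => hK1 ν.1 ν.2) hK2
      rw [show (1:ℝ)/1 = 1 from by norm_num] at hstech
      simp only [ENNReal.rpow_one] at hstech
      calc ∑' (ν : ↑((↑Λ : Set MIdx)ᶜ)), B ν.1 * A ν.1
          ≤ ∑' (ν : ↑((↑Λ : Set MIdx)ᶜ)), M * A ν.1 :=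
            ENNReal.tsum_le_tsum (fun ν => mul_le_mul' (hMB ν.1) le_rfl)
        _ = M * ∑' (ν : ↑((↑Λ : Set MIdx)ᶜ)), A ν.1 := ENNReal.tsum_mul_left
        _ ≤ M * (S ^ (1/q) * ((m : ℝ≥0∞) + 1) ^ (-(1/q - 1))) := mul_le_mul' le_rfl hstech
        _ = M * S ^ (1/q) * ENNReal.ofReal (((m : ℝ) + 1) ^ (-r)) := by
            rw [← hrq, hconv r, mul_assoc]
    · have hc1 : 1 ≤ p.toReal := by
        rw [← ENNReal.toReal_one]
        exact ENNReal.toReal_mono hptop hp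
      have hMB : (∑' (ν : ↑((↑Λ : Set MIdx)ᶜ)), B ν.1 ^ p.toReal) ^ (1 / p.toReal) ≤ M := by
        rw [hM, lpF, if_neg hptop]
        refine ENNReal.rpow_le_rpow ?_ (by positivity)
        have e2 : ∑' (ν : ↑((↑Λ : Set MIdx)ᶜ)), B ν.1 ^ p.toReal
            = ∑' (ν : MIdx), Set.indicator ((↑Λ : Set MIdx)ᶜ) (fun ν => B ν ^ p.toReal) ν :=
          tsum_subtype ((↑Λ : Set MIdx)ᶜ) (fun ν => B ν ^ p.toReal)
        rw [e2]
        exact Summable.tsum_le_tsum (fun ν => Set.indicator_le_self _ _ ν)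
          ENNReal.summable ENNReal.summable
      by_cases hp1 : p = 1
      · -- p = 1
        have hcr : p.toReal = 1 := by rw [hp1]; simp
        have hrq : r = 1 / q := by rw [hrdef, hcr]; ring
        have hMB' : ∑' (ν : ↑((↑Λ : Set MIdx)ᶜ)), B ν.1 ≤ M := by
          have := hMB
          rw [hcr] at this
          simpa using this
        calc ∑' (ν : ↑((↑Λ : Set MIdx)ᶜ)), B ν.1 * A ν.1
            ≤ ∑' (ν : ↑((↑Λ : Set MIdx)ᶜ)), B ν.1 * (S / ((m : ℝ≥0∞) + 1)) ^ (1/q) :=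
              ENNReal.tsum_le_tsum (fun ν => mul_le_mul' le_rfl (hK1 ν.1 ν.2))
          _ = (∑' (ν : ↑((↑Λ : Set MIdx)ᶜ)), B ν.1) * (S / ((m : ℝ≥0∞) + 1)) ^ (1/q) :=
              ENNReal.tsum_mul_right
          _ ≤ M * (S / ((m : ℝ≥0∞) + 1)) ^ (1/q) := mul_le_mul' hMB' le_rfl
          _ = M * S ^ (1/q) * ENNReal.ofReal (((m : ℝ) + 1) ^ (-r)) := by
              rw [div_eq_mul_inv,
                ENNReal.mul_rpow_of_ne_top hStop (ENNReal.inv_ne_top.mpr hm0),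
                ENNReal.inv_rpow, ← ENNReal.rpow_neg, ← hrq, hconv r, mul_assoc]
      · -- 1 < p < ∞
        have hc : 1 < p.toReal := lt_of_le_of_ne hc1 (fun h => hp1 (by
          have := ENNReal.toReal_eq_one_iff p
          exact this.mp h.symm))
        have hcs : p.toReal.HolderConjugate (Real.conjExponent p.toReal) :=
          Real.HolderConjugate.conjExponent hc
        set s : ℝ := Real.conjExponent p.toReal with hsdef
        have hs : 0 < s := hcs.symm.pos
        have h1s : 1 / s = 1 - 1 / p.toReal := by
          have h := hcs.inv_add_inv_eq_one
          rw [one_div, one_div]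
          linarith
        have hrq : r = 1 / q - 1 / s := by rw [hrdef, h1s]; ring
        have hqs : q ≤ s := by
          have h1 : 1 / s < 1 / q := by rw [hrq] at hr; linarith
          have h2 := (div_lt_div_iff₀ hs hq).mp h1
          linarith
        have hstech := stechkin (fun ν : ↑((↑Λ : Set MIdx)ᶜ) => A ν.1) hS0 hStop hq hqs m
          (fun ν => hA0 ν.1) (fun ν => hAtop ν.1)
          (fun ν => hK1 ν.1 ν.2) hK2
        calc ∑' (ν : ↑((↑Λ : Set MIdx)ᶜ)), B ν.1 * A ν.1
            ≤ (∑' (ν : ↑((↑Λ : Set MIdx)ᶜ)), B ν.1 ^ p.toReal) ^ (1 / p.toReal) *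
              (∑' (ν : ↑((↑Λ : Set MIdx)ᶜ)), A ν.1 ^ s) ^ (1 / s) :=
              holder_tsum _ _ hcs
          _ ≤ M * (S ^ (1/q) * ((m : ℝ≥0∞) + 1) ^ (-(1/q - 1/s))) := mul_le_mul' hMB hstech
          _ = M * S ^ (1/q) * ENNReal.ofReal (((m : ℝ) + 1) ^ (-r)) := by
              rw [← hrq, hconv r, mul_assoc]
end
end

section
/- Let X be a Banach space, ρ = (ρ_j)_{j≥1} a sequence with ρ_j > 1 for all j, and y ∈ Y with Σ_{j≥1} |y_j|/ρ_j < ∞. For a bounded family v = (v_ν)_{ν∈F} in X define (T_{ρ,y} v)_ν := (ρ − |y|)^ν Σ_{μ≥ν} v_μ · (μ!/((μ−ν)! ν!)) · ρ^{−μ} y^{μ−ν}. Then sup_{ν∈F} ‖(T_{ρ,y} v)_ν‖_X ≤ (∏_{j=1}^∞ (1 − |y_j|/ρ_j)^{−1}) · sup_{μ∈F} ‖v_μ‖_X, the infinite product being finite under the stated summability assumption. -/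
open scoped BigOperators ENNReal

noncomputable section

/-- `μ!/((μ-ν)!ν!) = ∏_j C(μ_j, ν_j)` (meaningful for `ν ≤ μ`). -/
def mchoose (μ ν : MIdx) : ℕ := μ.prod fun j k => k.choose (ν j)

/-- Express a `Finsupp.prod` as a product over a larger finset. -/
lemma finsupp_prod_eq {N : Type*} [CommMonoid N] (f : MIdx) {s : Finset ℕ}
    (hs : f.support ⊆ s) (g : ℕ → ℕ → N)
    (h : ∀ i ∈ s, f i = 0 → g i 0 = 1) : f.prod g = ∏ i ∈ s, g i (f i) := by
  rw [Finsupp.prod]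
  apply Finset.prod_subset hs
  intro i hi hni
  have h0 : f i = 0 := Finsupp.notMem_support_iff.mp hni
  rw [h0]; exact h i hi h0

/-- Partial products are below the `tprod` for nonneg real factors that are `≥ 1` off `s`. -/
lemma real_prod_le_tprod {f : ℕ → ℝ} (hf : Multipliable f) (h0 : ∀ i, 0 ≤ f i)
    (s : Finset ℕ) (h1 : ∀ i ∉ s, 1 ≤ f i) : ∏ i ∈ s, f i ≤ ∏' i, f i := by
  refine ge_of_tendsto hf.hasProd ?_
  filter_upwards [Filter.eventually_ge_atTop s] with t hst
  calc ∏ i ∈ s, f i ≤ (∏ i ∈ t \ s, f i) * ∏ i ∈ s, f i := by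
        refine le_mul_of_one_le_left (Finset.prod_nonneg fun i _ => h0 i) ?_
        calc (1:ℝ) = ∏ _i ∈ t \ s, 1 := by simp
          _ ≤ ∏ i ∈ t \ s, f i :=
            Finset.prod_le_prod (fun i _ => zero_le_one)
              (fun i hi => h1 i (Finset.mem_sdiff.mp hi).2)
    _ = ∏ i ∈ t, f i := Finset.prod_sdiff hst

lemma finsupp_prod_split (σ : MIdx) (G : ℕ → ℕ → ℝ) (hG0 : ∀ i, G i 0 = 1) (j : ℕ) :
    σ.prod G = G j (σ j) * (σ.erase j).prod G := by
  by_cases h : σ j = 0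
  · rw [h, hG0, one_mul, Finsupp.erase_of_notMem_support]
    simpa using h
  · have hj : j ∈ σ.support := Finsupp.mem_support_iff.mpr h
    rw [Finsupp.prod, ← Finset.mul_prod_erase _ _ hj]
    congr 1
    rw [Finsupp.prod, Finsupp.support_erase]
    refine Finset.prod_congr rfl fun i hi => ?_
    rw [Finsupp.erase_ne (Finset.ne_of_mem_erase hi)]

lemma sum_finsupp_prod_le (G : ℕ → ℕ → ℝ) (S : ℕ → ℝ)
    (hG0 : ∀ j, G j 0 = 1) (hGnn : ∀ j k, 0 ≤ G j k)
    (hS : ∀ j, HasSum (G j) (S j)) :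
    ∀ (s : Finset ℕ) (A : Finset MIdx), (∀ σ ∈ A, σ.support ⊆ s) →
      ∑ σ ∈ A, σ.prod G ≤ ∏ j ∈ s, S j := by
  intro s
  induction s using Finset.induction_on with
  | empty =>
    intro A hA
    have hsub : A ⊆ {0} := by
      intro σ hσ
      simp only [Finset.mem_singleton]
      ext i
      by_contra h
      exact absurd (hA σ hσ (Finsupp.mem_support_iff.mpr (by simpa using h))) (by simp)
    calc ∑ σ ∈ A, σ.prod G ≤ ∑ σ ∈ ({0} : Finset MIdx), σ.prod G := by
          refine Finset.sum_le_sum_of_subset_of_nonneg hsub fun σ _ _ => ?_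
          exact Finset.prod_nonneg fun i _ => hGnn i _
      _ = 1 := by simp
      _ = ∏ j ∈ (∅ : Finset ℕ), S j := by simp
  | @insert j s' hj ih =>
    intro A hA
    have hSnn : ∀ i, 0 ≤ S i := fun i => by
      simpa using sum_le_hasSum (∅ : Finset ℕ) (fun k _ => hGnn i k) (hS i)
    set E : Finset MIdx := A.image (fun σ : MIdx => σ.erase j) with hE
    set N : ℕ := A.sup (fun σ : MIdx => σ j) with hN
    have hinj : Set.InjOn (fun σ : MIdx => (σ j, σ.erase j)) A := by
      intro σ₁ _ σ₂ _ h
      simp only [Prod.mk.injEq] at h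
      ext i
      by_cases hij : i = j
      · subst hij; exact h.1
      · have := congrArg (fun τ : MIdx => τ i) h.2
        simpa [Finsupp.erase_ne hij] using this
    have hEsub : ∀ τ ∈ E, τ.support ⊆ s' := by
      intro τ hτ
      obtain ⟨σ, hσ, rfl⟩ := Finset.mem_image.mp hτ
      intro i hi
      rw [Finsupp.support_erase] at hi
      have hij := Finset.ne_of_mem_erase hi
      have := hA σ hσ (Finset.mem_of_mem_erase hi)
      rcases Finset.mem_insert.mp this with h | h
      · exact absurd h hij
      · exact h
    calc ∑ σ ∈ A, σ.prod G
        = ∑ σ ∈ A, G j (σ j) * (σ.erase j).prod G :=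
          Finset.sum_congr rfl fun σ _ => finsupp_prod_split σ G hG0 j
      _ = ∑ p ∈ A.image (fun σ : MIdx => (σ j, σ.erase j)), G j p.1 * p.2.prod G :=
          (Finset.sum_image (f := fun p : ℕ × MIdx => G j p.1 * p.2.prod G)
            (fun σ₁ h₁ σ₂ h₂ h => hinj h₁ h₂ h)).symm
      _ ≤ ∑ p ∈ (Finset.range (N + 1)) ×ˢ E, G j p.1 * p.2.prod G := by
          refine Finset.sum_le_sum_of_subset_of_nonneg ?_ fun p _ _ =>
            mul_nonneg (hGnn _ _) (Finset.prod_nonneg fun i _ => hGnn i _)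
          intro p hp
          obtain ⟨σ, hσ, rfl⟩ := Finset.mem_image.mp hp
          refine Finset.mem_product.mpr ⟨?_, Finset.mem_image_of_mem _ hσ⟩
          exact Finset.mem_range.mpr
            (Nat.lt_succ_of_le (Finset.le_sup (f := fun σ : MIdx => σ j) hσ))
      _ = (∑ k ∈ Finset.range (N + 1), G j k) * (∑ τ ∈ E, τ.prod G) := by
          rw [Finset.sum_product, Finset.sum_mul]
          exact Finset.sum_congr rfl fun k _ => by rw [Finset.mul_sum]
      _ ≤ S j * ∏ i ∈ s', S i := by
          refine mul_le_mul (sum_le_hasSum _ (fun k _ => hGnn j k) (hS j))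
            (ih E hEsub)
            (Finset.sum_nonneg fun τ _ => Finset.prod_nonneg fun i _ => hGnn i _)
            (hSnn j)
      _ = ∏ i ∈ insert j s', S i := (Finset.prod_insert hj).symm

lemma mult_aux (x : ℕ → ℝ) (hx0 : ∀ j, 0 ≤ x j) (hx1 : ∀ j, x j < 1)
    (hsum : Summable x) : Multipliable fun j => (1 - x j)⁻¹ := by
  have h1x : ∀ j, 0 < 1 - x j := fun j => by linarith [hx1 j]
  have hlog : Summable fun j => Real.log ((1 - x j)⁻¹) := by
    refine Summable.of_norm_bounded_eventually (hsum.mul_left 2) ?_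
    rw [Nat.cofinite_eq_atTop]
    have hev : ∀ᶠ j in Filter.atTop, x j ≤ 1/2 := by
      have := hsum.tendsto_atTop_zero
      filter_upwards [this.eventually_le_const (by norm_num : (0:ℝ) < 1/2)] with j hj
      exact hj
    filter_upwards [hev] with j hj
    have h1 : (1:ℝ) ≤ (1 - x j)⁻¹ := by
      rw [le_inv_comm₀] <;> [skip; norm_num; exact h1x j]
      linarith [hx0 j]
    rw [Real.norm_eq_abs, abs_of_nonneg (Real.log_nonneg h1)]
    have h2 : Real.log ((1 - x j)⁻¹) ≤ (1 - x j)⁻¹ - 1 :=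
      Real.log_le_sub_one_of_pos (inv_pos.mpr (h1x j))
    have h3 : (1 - x j)⁻¹ ≤ 1 + 2 * x j := by
      rw [inv_le_iff_one_le_mul₀ (h1x j)]
      nlinarith [hx0 j]
    linarith
  have := Real.multipliable_of_summable_log (fun j => inv_pos.mpr (h1x j)) hlog
  exact this

/-- The operator `T_{ρ,y}` has `ℓ_∞(F,X) → ℓ_∞(F,X)` norm at most
`∏_j (1 - |y_j|/ρ_j)^{-1}`, provided `Σ_j |y_j|/ρ_j < ∞`: for a bounded family `v`,
`sup_ν ‖(T_{ρ,y} v)_ν‖ ≤ (∏_j (1 - |y_j|/ρ_j)^{-1}) ⨆_μ ‖v_μ‖`.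
The first conjunct asserts the convergence (finiteness) of the infinite product, and
the second asserts the absolute convergence of the series defining `T_{ρ,y} v`. -/
theorem operator_linfty_bound
    {X : Type*} [NormedAddCommGroup X] [NormedSpace ℝ X] [CompleteSpace X]
    (ρ : ℕ → ℝ) (hρ : ∀ j, 1 < ρ j)
    (y : ℕ → ℝ) (hy : ∀ j, |y j| ≤ 1)
    (hsum : Summable fun j => |y j| / ρ j)
    (v : MIdx → X) (hv : BddAbove (Set.range fun ν : MIdx => ‖v ν‖))
    (T : MIdx → X)
    (hT : ∀ ν : MIdx, T ν = mpow (fun j => ρ j - |y j|) ν •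
      ∑' μ : {μ : MIdx // ν ≤ μ},
        ((mchoose μ.1 ν : ℝ) * (mpow ρ μ.1)⁻¹ * mpow y (μ.1 - ν)) • v μ.1) :
    Multipliable (fun j => (1 - |y j| / ρ j)⁻¹) ∧
    (∀ ν : MIdx, Summable fun μ : {μ : MIdx // ν ≤ μ} =>
      ‖((mchoose μ.1 ν : ℝ) * (mpow ρ μ.1)⁻¹ * mpow y (μ.1 - ν)) • v μ.1‖) ∧
    ∀ ν : MIdx, ‖T ν‖ ≤ (∏' j, (1 - |y j| / ρ j)⁻¹) * ⨆ μ : MIdx, ‖v μ‖ := by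
  have hρ0 : ∀ j, (0:ℝ) < ρ j := fun j => lt_trans one_pos (hρ j)
  set x : ℕ → ℝ := fun j => |y j| / ρ j with hxdef
  have hx0 : ∀ j, 0 ≤ x j := fun j => div_nonneg (abs_nonneg _) (hρ0 j).le
  have hx1 : ∀ j, x j < 1 := fun j => (div_lt_one (hρ0 j)).mpr (lt_of_le_of_lt (hy j) (hρ j))
  have h1x : ∀ j, 0 < 1 - x j := fun j => by linarith [hx1 j]
  have hmult : Multipliable fun j => (1 - x j)⁻¹ := mult_aux x hx0 hx1 hsum
  set P : ℝ := ∏' j, (1 - x j)⁻¹ with hPdef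
  have hfac1 : ∀ j, (1:ℝ) ≤ (1 - x j)⁻¹ := fun j =>
    (one_le_inv₀ (h1x j)).mpr (by linarith [hx0 j])
  have hPle : ∀ s : Finset ℕ, ∏ j ∈ s, (1 - x j)⁻¹ ≤ P := fun s =>
    real_prod_le_tprod hmult (fun i => (inv_pos.mpr (h1x i)).le) s (fun i _ => hfac1 i)
  have hP0 : 0 ≤ P := le_trans zero_le_one (by simpa using hPle ∅)
  set M : ℝ := ⨆ μ : MIdx, ‖v μ‖ with hMdef
  have hM : ∀ μ : MIdx, ‖v μ‖ ≤ M := fun μ => le_ciSup hv μ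
  have hM0 : 0 ≤ M := le_trans (norm_nonneg _) (hM 0)
  -- per-ν data
  set K : MIdx → ℝ := fun ν => ∏ j ∈ ν.support, ((1 - x j) ^ (ν j))⁻¹ with hKdef
  have hK0 : ∀ ν, 0 ≤ K ν := fun ν =>
    Finset.prod_nonneg fun j _ => inv_nonneg.mpr (pow_nonneg (h1x j).le _)
  have main : ∀ ν : MIdx,
      (Summable fun μ : {μ : MIdx // ν ≤ μ} =>
        ‖((mchoose μ.1 ν : ℝ) * (mpow ρ μ.1)⁻¹ * mpow y (μ.1 - ν)) • v μ.1‖) ∧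
      (∑' μ : {μ : MIdx // ν ≤ μ},
        ‖((mchoose μ.1 ν : ℝ) * (mpow ρ μ.1)⁻¹ * mpow y (μ.1 - ν)) • v μ.1‖
        ≤ (mpow ρ ν)⁻¹ * (K ν * P) * M) := by
    intro ν
    set G : ℕ → ℕ → ℝ := fun j k => (((k + ν j).choose (ν j) : ℕ) : ℝ) * x j ^ k with hGdef
    have hG0 : ∀ j, G j 0 = 1 := fun j => by simp [hGdef]
    have hGnn : ∀ j k, 0 ≤ G j k := fun j k =>
      mul_nonneg (Nat.cast_nonneg _) (pow_nonneg (hx0 j) _)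
    have hS : ∀ j, HasSum (G j) (1 / (1 - x j) ^ (ν j + 1)) := fun j =>
      hasSum_choose_mul_geometric_of_norm_lt_one (ν j)
        (by rw [Real.norm_eq_abs, abs_of_nonneg (hx0 j)]; exact hx1 j)
    have hmpos : 0 < mpow ρ ν := by
      have : mpow ρ ν = ∏ i ∈ ν.support, ρ i ^ ν i := rfl
      rw [this]; exact Finset.prod_pos fun i _ => pow_pos (hρ0 i) _
    -- the key coefficient identity
    have hkey : ∀ σ : MIdx,
        |(mchoose (ν + σ) ν : ℝ) * (mpow ρ (ν + σ))⁻¹ * mpow y (ν + σ - ν)| =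
          (mpow ρ ν)⁻¹ * σ.prod G := by
      intro σ
      have hcancel : ν + σ - ν = σ := add_tsub_cancel_left ν σ
      set s : Finset ℕ := ν.support ∪ σ.support with hs
      have hνs : ν.support ⊆ s := Finset.subset_union_left
      have hσs : σ.support ⊆ s := Finset.subset_union_right
      have hνσs : (ν + σ).support ⊆ s := Finsupp.support_add
      have e1 : mchoose (ν + σ) ν = ∏ i ∈ s, ((ν + σ) i).choose (ν i) := by
        refine finsupp_prod_eq _ hνσs _ fun i _ h0 => ?_
        have hνi : ν i = 0 := by
          rw [Finsupp.add_apply] at h0; omega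
        rw [hνi]; simp
      have e2 : mpow ρ (ν + σ) = ∏ i ∈ s, ρ i ^ ((ν + σ) i) :=
        finsupp_prod_eq _ hνσs _ fun i _ _ => pow_zero _
      have e3 : mpow y σ = ∏ i ∈ s, y i ^ σ i :=
        finsupp_prod_eq _ hσs _ fun i _ _ => pow_zero _
      have e4 : mpow ρ ν = ∏ i ∈ s, ρ i ^ ν i :=
        finsupp_prod_eq _ hνs _ fun i _ _ => pow_zero _
      have e5 : σ.prod G = ∏ i ∈ s, G i (σ i) := by
        refine finsupp_prod_eq _ hσs _ fun i _ _ => ?_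
        simp [hGdef]
      rw [hcancel, e1, e2, e3, e4, e5]
      push_cast
      rw [abs_mul, abs_mul, abs_inv, Finset.abs_prod, Finset.abs_prod, Finset.abs_prod,
        ← Finset.prod_inv_distrib, ← Finset.prod_mul_distrib, ← Finset.prod_mul_distrib,
        ← Finset.prod_inv_distrib, ← Finset.prod_mul_distrib]
      refine Finset.prod_congr rfl fun i _ => ?_
      have hρi : (ρ i : ℝ) ≠ 0 := (hρ0 i).ne'
      simp only [hGdef, Finsupp.coe_add, Pi.add_apply, abs_mul, abs_pow, abs_inv,
        Nat.abs_cast, abs_abs, abs_of_pos (hρ0 i)]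
      have hch : (((ν i + σ i).choose (ν i) : ℕ) : ℝ) = (((σ i + ν i).choose (ν i) : ℕ) : ℝ) := by
        rw [Nat.add_comm]
      rw [hch]
      have hxe : x i = |y i| / ρ i := rfl
      rw [hxe, div_pow, pow_add]
      field_simp
      try ring
    -- summability of the dominating family
    set F : MIdx → ℝ := fun σ => σ.prod G with hFdef
    have hFnn : ∀ σ, 0 ≤ F σ := fun σ => Finset.prod_nonneg fun i _ => hGnn i _
    have hFsum_le : ∀ A : Finset MIdx, ∑ σ ∈ A, F σ ≤ K ν * P := by
      intro A
      set s : Finset ℕ := ν.support ∪ A.sup Finsupp.support with hs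
      have hA : ∀ σ ∈ A, σ.support ⊆ s := fun σ hσ =>
        subset_trans (Finset.le_sup (f := Finsupp.support) hσ) Finset.subset_union_right
      have h1 := sum_finsupp_prod_le G (fun j => 1 / (1 - x j) ^ (ν j + 1)) hG0 hGnn hS s A hA
      refine le_trans h1 ?_
      have h2 : ∏ j ∈ s, (1 / (1 - x j) ^ (ν j + 1)) =
          (∏ j ∈ s, ((1 - x j) ^ (ν j))⁻¹) * ∏ j ∈ s, (1 - x j)⁻¹ := by
        rw [← Finset.prod_mul_distrib]
        refine Finset.prod_congr rfl fun j _ => ?_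
        rw [pow_succ, one_div, mul_inv]
      rw [h2]
      have h3 : ∏ j ∈ s, ((1 - x j) ^ (ν j))⁻¹ = K ν := by
        refine (Finset.prod_subset Finset.subset_union_left fun i _ hni => ?_).symm
        rw [Finsupp.notMem_support_iff.mp hni, pow_zero, inv_one]
      rw [h3]
      exact mul_le_mul_of_nonneg_left (hPle s) (hK0 ν)
    have hFsummable : Summable F :=
      summable_of_sum_le hFnn hFsum_le
    have hFtsum : ∑' σ, F σ ≤ K ν * P := hFsummable.tsum_le_of_sum_le hFsum_le
    -- equivalence with the subtype
    set e : MIdx ≃ {μ : MIdx // ν ≤ μ} :=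
      { toFun := fun σ => ⟨ν + σ, le_add_right le_rfl⟩
        invFun := fun μ => μ.1 - ν
        left_inv := fun σ => add_tsub_cancel_left ν σ
        right_inv := fun μ => Subtype.ext (add_tsub_cancel_of_le μ.2) } with hedef
    set f : {μ : MIdx // ν ≤ μ} → ℝ := fun μ =>
      ‖((mchoose μ.1 ν : ℝ) * (mpow ρ μ.1)⁻¹ * mpow y (μ.1 - ν)) • v μ.1‖ with hfdef
    have hfe : ∀ σ : MIdx, f (e σ) ≤ ((mpow ρ ν)⁻¹ * F σ) * M := by
      intro σ
      have : f (e σ) = |(mchoose (ν + σ) ν : ℝ) * (mpow ρ (ν + σ))⁻¹ * mpow y (ν + σ - ν)|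
          * ‖v (ν + σ)‖ := by
        simp only [hfdef, hedef, Equiv.coe_fn_mk, norm_smul, Real.norm_eq_abs]
      rw [this, hkey σ]
      exact mul_le_mul_of_nonneg_left (hM _)
        (mul_nonneg (inv_nonneg.mpr hmpos.le) (hFnn σ))
    have hbsum : Summable fun σ : MIdx => ((mpow ρ ν)⁻¹ * F σ) * M :=
      (hFsummable.mul_left _).mul_right _
    have hfes : Summable (f ∘ e) :=
      Summable.of_nonneg_of_le (fun σ => norm_nonneg _) hfe hbsum
    have hfsum : Summable f := (Equiv.summable_iff e).mp hfes
    refine ⟨hfsum, ?_⟩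
    have ht1 : ∑' μ, f μ = ∑' σ, f (e σ) := (Equiv.tsum_eq e f).symm
    rw [ht1]
    calc ∑' σ, f (e σ) ≤ ∑' σ, ((mpow ρ ν)⁻¹ * F σ) * M :=
          Summable.tsum_le_tsum hfe hfes hbsum
      _ = (mpow ρ ν)⁻¹ * (∑' σ, F σ) * M := by
          rw [tsum_mul_right, tsum_mul_left]
      _ ≤ (mpow ρ ν)⁻¹ * (K ν * P) * M := by
          refine mul_le_mul_of_nonneg_right
            (mul_le_mul_of_nonneg_left hFtsum (inv_nonneg.mpr hmpos.le)) hM0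
  refine ⟨hmult, fun ν => (main ν).1, fun ν => ?_⟩
  -- the final bound
  have hρy : ∀ j, 0 < ρ j - |y j| := fun j => by linarith [hy j, hρ j]
  have hapos : 0 < mpow (fun j => ρ j - |y j|) ν := by
    have : mpow (fun j => ρ j - |y j|) ν = ∏ i ∈ ν.support, (ρ i - |y i|) ^ ν i := rfl
    rw [this]; exact Finset.prod_pos fun i _ => pow_pos (hρy i) _
  have hmpos : 0 < mpow ρ ν := by
    have : mpow ρ ν = ∏ i ∈ ν.support, ρ i ^ ν i := rfl
    rw [this]; exact Finset.prod_pos fun i _ => pow_pos (hρ0 i) _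
  have hone : mpow (fun j => ρ j - |y j|) ν * ((mpow ρ ν)⁻¹ * K ν) = 1 := by
    have ea : mpow (fun j => ρ j - |y j|) ν = ∏ i ∈ ν.support, (ρ i - |y i|) ^ ν i := rfl
    have eb : mpow ρ ν = ∏ i ∈ ν.support, ρ i ^ ν i := rfl
    have ec : K ν = ∏ i ∈ ν.support, ((1 - x i) ^ ν i)⁻¹ := rfl
    rw [ea, eb, ec, ← Finset.prod_inv_distrib, ← Finset.prod_mul_distrib,
      ← Finset.prod_mul_distrib]
    refine Finset.prod_eq_one fun i _ => ?_
    have h1 : 1 - x i = (ρ i - |y i|) / ρ i := by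
      have hxe : x i = |y i| / ρ i := rfl
      rw [hxe, eq_div_iff (hρ0 i).ne', sub_mul, div_mul_cancel₀ _ (hρ0 i).ne', one_mul]
    rw [h1, div_pow]
    have h2 : (ρ i : ℝ) ^ ν i ≠ 0 := pow_ne_zero _ (hρ0 i).ne'
    have h3 : (ρ i - |y i|) ^ ν i ≠ 0 := pow_ne_zero _ (hρy i).ne'
    field_simp
  rw [hT ν]
  rw [norm_smul, Real.norm_eq_abs, abs_of_pos hapos]
  calc mpow (fun j => ρ j - |y j|) ν * ‖∑' μ : {μ : MIdx // ν ≤ μ},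
        ((mchoose μ.1 ν : ℝ) * (mpow ρ μ.1)⁻¹ * mpow y (μ.1 - ν)) • v μ.1‖
      ≤ mpow (fun j => ρ j - |y j|) ν * ((mpow ρ ν)⁻¹ * (K ν * P) * M) := by
        refine mul_le_mul_of_nonneg_left
          (le_trans (norm_tsum_le_tsum_norm (main ν).1) (main ν).2) hapos.le
    _ = (mpow (fun j => ρ j - |y j|) ν * ((mpow ρ ν)⁻¹ * K ν)) * (P * M) := by ring
    _ = P * M := by rw [hone, one_mul]
end
end
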